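/- Let α ∈ (0,1), let F be a cumulative distribution function with ∫_{−∞}^0 F(y) dy < ∞ that satisfies the quantile growth condition at level α with constants b_α > 0 and M_α > 0, and let G be a cumulative distribution function with ∫_{−∞}^0 G(y) dy < ∞ and sup_y |F(y) − G(y)| < M_α. Then | CVaR_α(G) − CVaR_α(F) + (1/α)∫_{−∞}^{VaR_α(F)} (G(y) − F(y)) dy | ≤ (b_α/α) · (sup_y |F(y) − G(y)|)²; that is, CVaR is smooth at F with first-order (linear) term G ↦ (1/α)∫_{−∞}^{VaR_α(F)} (F(y) − G(y)) dy and quadratic residual. -/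

import Mathlib

open MeasureTheory

/-- A cumulative distribution function: nondecreasing, right-continuous,
tending to `0` at `−∞` and to `1` at `+∞`. -/
def IsCDF (F : ℝ → ℝ) : Prop :=
  Monotone F ∧ (∀ y : ℝ, ContinuousWithinAt F (Set.Ici y) y) ∧
    Filter.Tendsto F Filter.atBot (nhds 0) ∧ Filter.Tendsto F Filter.atTop (nhds 1)

/-- Value-at-risk at level `α`: `VaR_α(F) = inf{ y : F y ≥ α }`. -/
noncomputable def VaR (α : ℝ) (F : ℝ → ℝ) : ℝ :=
  sInf {y : ℝ | α ≤ F y}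

/-- Conditional value-at-risk at level `α`:
`CVaR_α(F) = VaR_α(F) − (1/α) ∫_{−∞}^{VaR_α(F)} F(y) dy`. -/
noncomputable def CVaR (α : ℝ) (F : ℝ → ℝ) : ℝ :=
  VaR α F - (1 / α) * ∫ y in Set.Iio (VaR α F), F y

/-- `F` satisfies the quantile growth condition at level `α` with constants
`b, M`: `|F(VaR_α(F) + b·y) − α| ≥ |y|` for all `y ∈ [−M, M]`. -/
def QuantileGrowth (α : ℝ) (F : ℝ → ℝ) (b M : ℝ) : Prop :=
  ∀ y ∈ Set.Icc (-M) M, |y| ≤ |F (VaR α F + b * y) - α|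

/- Auxiliary lemmas -/

lemma IsCDF.nonneg' {F : ℝ → ℝ} (hF : IsCDF F) (y : ℝ) : 0 ≤ F y :=
  le_of_tendsto hF.2.2.1 (Filter.eventually_atBot.2 ⟨y, fun _ hx => hF.1 hx⟩)

lemma IsCDF.le_one' {F : ℝ → ℝ} (hF : IsCDF F) (y : ℝ) : F y ≤ 1 :=
  ge_of_tendsto hF.2.2.2 (Filter.eventually_atTop.2 ⟨y, fun _ hx => hF.1 hx⟩)

lemma IsCDF.varSet_nonempty {α : ℝ} {F : ℝ → ℝ} (hF : IsCDF F) (hα : α < 1) :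
    Set.Nonempty {y : ℝ | α ≤ F y} := by
  obtain ⟨x, hx⟩ := (hF.2.2.2.eventually (eventually_ge_nhds hα)).exists
  exact ⟨x, hx⟩

lemma IsCDF.varSet_bddBelow {α : ℝ} {F : ℝ → ℝ} (hF : IsCDF F) (hα : 0 < α) :
    BddBelow {y : ℝ | α ≤ F y} := by
  obtain ⟨x₀, hx₀⟩ := Filter.eventually_atBot.1 (hF.2.2.1.eventually (eventually_lt_nhds hα))
  refine ⟨x₀, fun y hy => ?_⟩
  by_contra h
  push_neg at h
  exact absurd hy (not_le.2 (hx₀ y h.le))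

lemma IsCDF.var_mem {α : ℝ} {F : ℝ → ℝ} (hF : IsCDF F) (hα0 : 0 < α) (hα1 : α < 1) :
    α ≤ F (VaR α F) := by
  set v := VaR α F with hv
  have hne := hF.varSet_nonempty hα1
  have hbdd := hF.varSet_bddBelow hα0
  have htend : Filter.Tendsto F (nhdsWithin v (Set.Ioi v)) (nhds (F v)) :=
    (hF.2.1 v).mono_left (nhdsWithin_mono v Set.Ioi_subset_Ici_self)
  refine ge_of_tendsto htend ?_
  filter_upwards [self_mem_nhdsWithin] with t (ht : v < t)
  obtain ⟨x, hx, hxt⟩ := (csInf_lt_iff hbdd hne).1 ht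
  exact le_trans hx (hF.1 hxt.le)

lemma IsCDF.lt_of_lt_var {α : ℝ} {F : ℝ → ℝ} (hF : IsCDF F) (hα0 : 0 < α)
    {x : ℝ} (hx : x < VaR α F) : F x < α := by
  by_contra h
  push_neg at h
  exact absurd (csInf_le (hF.varSet_bddBelow hα0) h) (not_le.2 hx)

lemma IsCDF.integrableOn_Iio {F : ℝ → ℝ} (hF : IsCDF F)
    (hInt : IntegrableOn F (Set.Iic (0 : ℝ))) (v : ℝ) : IntegrableOn F (Set.Iio v) := by
  have h1 : IntegrableOn F (Set.Icc (0 : ℝ) v) :=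
    (hF.1.monotoneOn _).integrableOn_isCompact isCompact_Icc
  refine (hInt.union h1).mono_set fun x hx => ?_
  rcases le_or_gt x 0 with h | h
  · exact Or.inl h
  · exact Or.inr ⟨h.le, le_of_lt hx⟩

lemma IsCDF.integrableOn_Ico {F : ℝ → ℝ} (hF : IsCDF F) (a b : ℝ) :
    IntegrableOn F (Set.Ico a b) :=
  ((hF.1.monotoneOn _).integrableOn_isCompact isCompact_Icc).mono_set Set.Ico_subset_Icc_self

lemma integrableOn_Ico_const (a b c : ℝ) : IntegrableOn (fun _ => c) (Set.Ico a b) :=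
  integrableOn_const (by rw [Real.volume_Ico]; exact ENNReal.ofReal_ne_top)

lemma setIntegral_Ico_const (a b c : ℝ) (hab : a ≤ b) :
    (∫ _ in Set.Ico a b, c) = (b - a) * c := by
  rw [setIntegral_const, measureReal_def, Real.volume_Ico, ENNReal.toReal_ofReal (by linarith), smul_eq_mul]

lemma disjoint_Iio_Ico (a b : ℝ) : Disjoint (Set.Iio a) (Set.Ico a b) :=
  Set.disjoint_left.2 fun _ hx hx2 => absurd hx2.1 (not_le.2 hx)

/-- Smoothness of CVaR: under the quantile growth condition, the residual of
the first-order expansion of CVaR at `F` with linear term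
`G ↦ (1/α)∫_{−∞}^{VaR_α(F)} (F − G)` is quadratic:
`|CVaR_α(G) − CVaR_α(F) + (1/α)∫_{−∞}^{VaR_α(F)} (G − F)| ≤ (b_α/α)·(sup_y |F−G|)²`. -/
theorem CVaR_smoothness (α : ℝ) (hα : α ∈ Set.Ioo (0 : ℝ) 1)
    (F : ℝ → ℝ) (hF : IsCDF F) (hIntF : IntegrableOn F (Set.Iic (0 : ℝ)))
    (bα Mα : ℝ) (hbα : 0 < bα) (hMα : 0 < Mα)
    (hgrowth : QuantileGrowth α F bα Mα)
    (G : ℝ → ℝ) (hG : IsCDF G) (hIntG : IntegrableOn G (Set.Iic (0 : ℝ)))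
    (hclose : (⨆ y : ℝ, |F y - G y|) < Mα) :
    |CVaR α G - CVaR α F + (1 / α) * ∫ y in Set.Iio (VaR α F), (G y - F y)| ≤
      (bα / α) * (⨆ y : ℝ, |F y - G y|) ^ 2 := by
  obtain ⟨hα0, hα1⟩ := hα
  set ε := ⨆ y : ℝ, |F y - G y| with hεdef
  set v := VaR α F with hvdef
  set w := VaR α G with hwdef
  have hA0 : (0 : ℝ) < 1 / α := by positivity
  -- basic bounds
  have hbdd : BddAbove (Set.range fun y => |F y - G y|) := by
    refine ⟨1, ?_⟩
    rintro _ ⟨y, rfl⟩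
    have h1 := hF.nonneg' y; have h2 := hF.le_one' y
    have h3 := hG.nonneg' y; have h4 := hG.le_one' y
    rw [abs_le]; constructor <;> linarith
  have hle : ∀ y, |F y - G y| ≤ ε := fun y => le_ciSup hbdd y
  have hε0 : 0 ≤ ε := le_trans (abs_nonneg _) (hle 0)
  have hFv : α ≤ F v := hF.var_mem hα0 hα1
  have hGw : α ≤ G w := hG.var_mem hα0 hα1
  have hGbdd := hG.varSet_bddBelow hα0
  have hGne := hG.varSet_nonempty hα1
  -- |w - v| ≤ bα * ε
  have hwv_upper : w ≤ v + bα * ε := by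
    have hgr := hgrowth ε ⟨by linarith, hclose.le⟩
    have hmono : α ≤ F (v + bα * ε) := le_trans hFv (hF.1 (by nlinarith))
    rw [abs_of_nonneg hε0, abs_of_nonneg (by linarith)] at hgr
    have hGge : α ≤ G (v + bα * ε) := by
      have h := abs_le.1 (hle (v + bα * ε))
      linarith [h.1, h.2]
    exact csInf_le hGbdd hGge
  have hwv_lower : v - bα * ε ≤ w := by
    by_contra hcon
    push_neg at hcon
    set D := v - bα * ε - w with hDdef
    have hD : 0 < D := by simp only [hDdef]; linarith
    set δ := min ((ε + Mα) / 2) (ε + D / (2 * bα)) with hδdef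
    have hd1 : 0 < D / (2 * bα) := by positivity
    have hδε : ε < δ := lt_min (by linarith) (by linarith)
    have hδM : δ < Mα := lt_of_le_of_lt (min_le_left _ _) (by linarith)
    have hδ0 : 0 < δ := lt_of_le_of_lt hε0 hδε
    -- F (v + bα * -δ) ≤ α - δ
    have hgr := hgrowth (-δ) ⟨by linarith, by linarith⟩
    have hFlt : F (v + bα * -δ) < α := hF.lt_of_lt_var hα0 (by nlinarith)
    rw [abs_neg, abs_of_pos hδ0, abs_of_neg (by linarith : F (v + bα * -δ) - α < 0)] at hgr
    -- v - bα * δ is a lower bound for {y | α ≤ G y}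
    have hlow : v - bα * δ ≤ w := by
      refine le_csInf hGne fun x hx => ?_
      by_contra hxlt
      push_neg at hxlt
      have hFx : F x ≤ α - δ := by
        have : F x ≤ F (v + bα * -δ) := hF.1 (by nlinarith)
        linarith
      have h := abs_le.1 (hle x)
      have : α ≤ G x := hx
      linarith [h.1, h.2]
    have hδ2 : δ ≤ ε + D / (2 * bα) := min_le_right _ _
    have hmul : bα * δ ≤ bα * ε + D / 2 := by
      have h := mul_le_mul_of_nonneg_left hδ2 hbα.le
      have hrw : bα * (ε + D / (2 * bα)) = bα * ε + D / 2 := by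
        field_simp
      linarith [hrw ▸ h]
    have : v - bα * δ ≥ v - bα * ε - D / 2 := by linarith
    simp only [hDdef] at this
    linarith
  -- integrability
  have hIntFv := hF.integrableOn_Iio hIntF v
  have hIntGv := hG.integrableOn_Iio hIntG v
  have hIntGw := hG.integrableOn_Iio hIntG w
  have hsub : (∫ y in Set.Iio v, (G y - F y)) =
      (∫ y in Set.Iio v, G y) - ∫ y in Set.Iio v, F y := integral_sub hIntGv hIntFv
  have hkey : CVaR α G - CVaR α F + (1 / α) * ∫ y in Set.Iio v, (G y - F y)
      = (w - v) - (1 / α) * ((∫ y in Set.Iio w, G y) - ∫ y in Set.Iio v, G y) := by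
    rw [CVaR, CVaR, ← hvdef, ← hwdef, hsub]; ring
  rw [hkey]
  rcases le_total v w with hvw | hvw
  · -- v ≤ w
    have hsplit : (∫ y in Set.Iio w, G y) =
        (∫ y in Set.Iio v, G y) + ∫ y in Set.Ico v w, G y := by
      rw [← setIntegral_union (disjoint_Iio_Ico v w) measurableSet_Ico hIntGv
        (hG.integrableOn_Ico v w), Set.Iio_union_Ico_eq_Iio hvw]
    rw [hsplit]
    have hup : (∫ y in Set.Ico v w, G y) ≤ (w - v) * α := by
      rw [← setIntegral_Ico_const v w α hvw]
      exact setIntegral_mono_on (hG.integrableOn_Ico v w) (integrableOn_Ico_const v w α)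
        measurableSet_Ico (fun x hx => (hG.lt_of_lt_var hα0 hx.2).le)
    have hlo : (w - v) * (α - ε) ≤ ∫ y in Set.Ico v w, G y := by
      rw [← setIntegral_Ico_const v w (α - ε) hvw]
      refine setIntegral_mono_on (integrableOn_Ico_const v w (α - ε))
        (hG.integrableOn_Ico v w) measurableSet_Ico fun x hx => ?_
      have h1 : α ≤ F x := le_trans hFv (hF.1 hx.1)
      have h := abs_le.1 (hle x)
      linarith [h.1, h.2]
    have hwv2 : w - v ≤ bα * ε := by linarith
    have hc1 : (1 / α) * ((w - v) * α) = w - v := by field_simp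
    have hc2 : (1 / α) * ((w - v) * (α - ε)) = (w - v) - (w - v) * ε * (1 / α) := by
      field_simp
    have hm1 := mul_le_mul_of_nonneg_left hup hA0.le
    have hm2 := mul_le_mul_of_nonneg_left hlo hA0.le
    rw [abs_of_nonneg (by linarith [hc1 ▸ hm1] : (0:ℝ) ≤ (w - v) -
      (1 / α) * (((∫ y in Set.Iio v, G y) + ∫ y in Set.Ico v w, G y) - ∫ y in Set.Iio v, G y))]
    have hε2 : (w - v) * ε ≤ bα * ε * ε := mul_le_mul_of_nonneg_right hwv2 hε0
    have hre : bα / α * ε ^ 2 = bα * ε * ε * (1 / α) := by ring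
    rw [hre]
    have h3 : (w - v) * ε * (1 / α) ≤ bα * ε * ε * (1 / α) :=
      mul_le_mul_of_nonneg_right hε2 hA0.le
    have h4 : ((∫ y in Set.Iio v, G y) + ∫ y in Set.Ico v w, G y) - (∫ y in Set.Iio v, G y)
        = ∫ y in Set.Ico v w, G y := by ring
    rw [h4]
    linarith [hc2 ▸ hm2]
  · -- w ≤ v
    have hsplit : (∫ y in Set.Iio v, G y) =
        (∫ y in Set.Iio w, G y) + ∫ y in Set.Ico w v, G y := by
      rw [← setIntegral_union (disjoint_Iio_Ico w v) measurableSet_Ico hIntGw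
        (hG.integrableOn_Ico w v), Set.Iio_union_Ico_eq_Iio hvw]
    rw [hsplit]
    have hlo : (v - w) * α ≤ ∫ y in Set.Ico w v, G y := by
      rw [← setIntegral_Ico_const w v α hvw]
      exact setIntegral_mono_on (integrableOn_Ico_const w v α) (hG.integrableOn_Ico w v)
        measurableSet_Ico (fun x hx => le_trans hGw (hG.1 hx.1))
    have hup : (∫ y in Set.Ico w v, G y) ≤ (v - w) * (α + ε) := by
      rw [← setIntegral_Ico_const w v (α + ε) hvw]
      refine setIntegral_mono_on (hG.integrableOn_Ico w v)
        (integrableOn_Ico_const w v (α + ε)) measurableSet_Ico fun x hx => ?_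
      have h1 : F x < α := hF.lt_of_lt_var hα0 hx.2
      have h := abs_le.1 (hle x)
      linarith [h.1, h.2]
    have hwv2 : v - w ≤ bα * ε := by linarith
    have hc1 : (1 / α) * ((v - w) * α) = v - w := by field_simp
    have hc2 : (1 / α) * ((v - w) * (α + ε)) = (v - w) + (v - w) * ε * (1 / α) := by
      field_simp
    have hm1 := mul_le_mul_of_nonneg_left hlo hA0.le
    have hm2 := mul_le_mul_of_nonneg_left hup hA0.le
    have h4 : (∫ y in Set.Iio w, G y) - ((∫ y in Set.Iio w, G y) + ∫ y in Set.Ico w v, G y)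
        = -(∫ y in Set.Ico w v, G y) := by ring
    have h5 : (w - v) - (1 / α) * ((∫ y in Set.Iio w, G y) -
        ((∫ y in Set.Iio w, G y) + ∫ y in Set.Ico w v, G y))
        = (w - v) + (1 / α) * (∫ y in Set.Ico w v, G y) := by ring
    rw [h5]
    rw [abs_of_nonneg (by linarith [hc1 ▸ hm1] : (0:ℝ) ≤
      (w - v) + (1 / α) * (∫ y in Set.Ico w v, G y))]
    have hε2 : (v - w) * ε ≤ bα * ε * ε := mul_le_mul_of_nonneg_right hwv2 hε0
    have h3 : (v - w) * ε * (1 / α) ≤ bα * ε * ε * (1 / α) :=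
      mul_le_mul_of_nonneg_right hε2 hA0.le
    have hre : bα / α * ε ^ 2 = bα * ε * ε * (1 / α) := by ring
    rw [hre]
    linarith [hc2 ▸ hm2]
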